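/- arXiv:1008.0905 — 2 statements merged into one kernel-verified Lean document; each statement's English description precedes it below -/
import Mathlib

section
/- Let α < β be real numbers with β − α < π, let M > 0, and set S = {r e^{iθ} : r ≥ M, α ≤ θ ≤ β} ⊂ ℂ. Suppose A is holomorphic on an open set containing S and A(μ) → 0 as |μ| → ∞ with μ ∈ S. Then there exist real numbers α̃, β̃ with α ≤ α̃ < β̃ ≤ β and M̃ ≥ M such that the map μ ↦ μ·(1 + A(μ)) is injective on the set {r e^{iθ} : r ≥ M̃, α̃ ≤ θ ≤ β̃}. -/
open Complex Real Filter Set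

noncomputable section

lemma aux_im_exp (γ θ : ℝ) (r : ℝ) :
    (Complex.exp (-(γ:ℂ)*I) * (r * Complex.exp (θ*I))).im = r * Real.sin (θ - γ) := by
  have h : Complex.exp (-(γ:ℂ)*I) * (r * Complex.exp (θ*I))
      = r * Complex.exp ((↑(θ - γ) : ℂ) * I) := by
    rw [show ((↑(θ - γ) : ℂ) * I) = (θ:ℂ)*I + (-(γ:ℂ)*I) by push_cast; ring,
      Complex.exp_add]
    ring
  rw [h]
  have := Complex.exp_ofReal_mul_I_im (θ - γ)
  calc ((r:ℂ) * Complex.exp ((↑(θ - γ) : ℂ) * I)).im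
      = r * (Complex.exp ((↑(θ - γ) : ℂ) * I)).im := by
        simp [Complex.mul_im]
    _ = r * Real.sin (θ - γ) := by rw [this]

lemma aux_re_exp (γ θ : ℝ) (r : ℝ) :
    (Complex.exp (-(γ:ℂ)*I) * (r * Complex.exp (θ*I))).re = r * Real.cos (θ - γ) := by
  have h : Complex.exp (-(γ:ℂ)*I) * (r * Complex.exp (θ*I))
      = r * Complex.exp ((↑(θ - γ) : ℂ) * I) := by
    rw [show ((↑(θ - γ) : ℂ) * I) = (θ:ℂ)*I + (-(γ:ℂ)*I) by push_cast; ring,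
      Complex.exp_add]
    ring
  rw [h]
  have := Complex.exp_ofReal_mul_I_re (θ - γ)
  calc ((r:ℂ) * Complex.exp ((↑(θ - γ) : ℂ) * I)).re
      = r * (Complex.exp ((↑(θ - γ) : ℂ) * I)).re := by
        simp [Complex.mul_re]
    _ = r * Real.cos (θ - γ) := by rw [this]

lemma aux_abs (θ : ℝ) (r : ℝ) (hr : 0 ≤ r) :
    ‖(r:ℂ) * Complex.exp ((θ:ℂ)*I)‖ = r := by
  rw [norm_mul, Complex.norm_exp_ofReal_mul_I, mul_one, Complex.norm_real, Real.norm_of_nonneg hr]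

lemma aux_abs_im_le (γ : ℝ) (w : ℂ) : |(Complex.exp (-(γ:ℂ)*I) * w).im| ≤ ‖w‖ := by
  calc |(Complex.exp (-(γ:ℂ)*I) * w).im| ≤ ‖Complex.exp (-(γ:ℂ)*I) * w‖ :=
        Complex.abs_im_le_norm _
    _ = ‖w‖ := by
        rw [norm_mul]
        rw [show (-(γ:ℂ)*I) = ((-γ:ℝ):ℂ) * I by push_cast; ring,
          Complex.norm_exp_ofReal_mul_I, one_mul]

lemma sin_ge_sin (d x : ℝ) (hd : 0 < d) (hdx : d ≤ x) (hx : x ≤ π - d) :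
    Real.sin d ≤ Real.sin x := by
  have hπ := Real.pi_pos
  have h2d : d ≤ π / 2 := by linarith
  have mono := Real.strictMonoOn_sin.monotoneOn
  rcases le_or_gt x (π / 2) with h | h
  · exact mono (by constructor <;> [linarith; linarith]) (by constructor <;> [linarith; linarith]) hdx
  · rw [← Real.sin_pi_sub x]
    exact mono (by constructor <;> [linarith; linarith]) (by constructor <;> [linarith; linarith]) (by linarith)

lemma mem_sector_iff (α β : ℝ) (hαβ : α < β) (hπ : β - α < π) (R : ℝ) (hR : 0 < R) (z : ℂ) :
    (∃ r θ : ℝ, R ≤ r ∧ α ≤ θ ∧ θ ≤ β ∧ z = r * Complex.exp ((θ:ℂ) * I)) ↔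
      R ≤ ‖z‖ ∧ 0 ≤ (Complex.exp (-(α:ℂ)*I) * z).im ∧
        (Complex.exp (-(β:ℂ)*I) * z).im ≤ 0 := by
  constructor
  · rintro ⟨r, θ, hRr, hαθ, hθβ, rfl⟩
    have hr0 : (0:ℝ) ≤ r := le_trans hR.le hRr
    refine ⟨by rw [aux_abs θ r hr0]; exact hRr, ?_, ?_⟩
    · rw [aux_im_exp]
      exact mul_nonneg hr0 (Real.sin_nonneg_of_nonneg_of_le_pi (by linarith) (by linarith))
    · rw [aux_im_exp]
      have : Real.sin (θ - β) ≤ 0 := by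
        have : Real.sin (β - θ) ≥ 0 :=
          Real.sin_nonneg_of_nonneg_of_le_pi (by linarith) (by linarith)
        rw [show θ - β = -(β - θ) by ring, Real.sin_neg]; linarith
      exact mul_nonpos_of_nonneg_of_nonpos hr0 this
  · rintro ⟨hRz, h1, h2⟩
    have hz : z ≠ 0 := by
      intro h; rw [h, norm_zero] at hRz; linarith
    set θ₀ := Complex.arg z with hθ₀
    have hzeq : z = (‖z‖ : ℂ) * Complex.exp ((θ₀:ℂ) * I) :=
      (Complex.norm_mul_exp_arg_mul_I z).symm
    have habs : (0:ℝ) < ‖z‖ := lt_of_lt_of_le hR hRz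
    rw [hzeq, aux_im_exp] at h1 h2
    have hs1 : 0 ≤ Real.sin (θ₀ - α) := by
      by_contra h
      push_neg at h
      nlinarith
    have hs2 : Real.sin (θ₀ - β) ≤ 0 := by
      by_contra h
      push_neg at h
      nlinarith
    set k : ℤ := ⌈(α - θ₀) / (2 * π)⌉ with hk
    set θ := θ₀ + 2 * π * k with hθdef
    have hπpos := Real.pi_pos
    have hk1 : (α - θ₀) / (2 * π) ≤ (k:ℝ) := Int.le_ceil _
    have hk2 : (k:ℝ) < (α - θ₀) / (2 * π) + 1 := Int.ceil_lt_add_one _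
    have hθα : α ≤ θ := by
      have := (div_le_iff₀ (by linarith : (0:ℝ) < 2*π)).mp hk1
      simp only [hθdef]; linarith
    have h2π : (0:ℝ) < 2*π := by linarith
    have hθα2 : θ < α + 2 * π := by
      have h := mul_lt_mul_of_pos_right hk2 h2π
      rw [add_mul, div_mul_cancel₀ _ (ne_of_gt h2π), one_mul] at h
      simp only [hθdef]; linarith
    have hsinθα : Real.sin (θ - α) = Real.sin (θ₀ - α) := by
      rw [hθdef, show θ₀ + 2 * π * (k:ℝ) - α = (θ₀ - α) + (k:ℝ) * (2 * π) by ring]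
      exact Real.sin_add_int_mul_two_pi _ k
    have hsinθβ : Real.sin (θ - β) = Real.sin (θ₀ - β) := by
      rw [hθdef, show θ₀ + 2 * π * (k:ℝ) - β = (θ₀ - β) + (k:ℝ) * (2 * π) by ring]
      exact Real.sin_add_int_mul_two_pi _ k
    have hθαπ : θ - α ≤ π := by
      by_contra h
      push_neg at h
      have h1' : Real.sin (θ - α) < 0 := by
        rw [show θ - α = (θ - α - π) + π by ring, Real.sin_add_pi]
        have : 0 < Real.sin (θ - α - π) :=
          Real.sin_pos_of_pos_of_lt_pi (by linarith) (by linarith)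
        linarith
      rw [hsinθα] at h1'; linarith
    have hθβ : θ ≤ β := by
      by_contra h
      push_neg at h
      have h2' : 0 < Real.sin (θ - β) :=
        Real.sin_pos_of_pos_of_lt_pi (by linarith) (by linarith)
      rw [hsinθβ] at h2'; linarith
    refine ⟨‖z‖, θ, hRz, hθα, hθβ, ?_⟩
    have hexp : Complex.exp ((θ:ℂ) * I) = Complex.exp ((θ₀:ℂ) * I) := by
      rw [hθdef]
      push_cast
      rw [show ((θ₀:ℂ) + 2 * ↑π * ↑k) * I = ↑θ₀ * I + ↑k * (2 * ↑π * I) by ring,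
        Complex.exp_add, Complex.exp_int_mul_two_pi_mul_I, mul_one]
    rw [hexp]
    exact hzeq

lemma mem_sector_of_close (α β : ℝ) (hαβ : α < β) (hπ : β - α < π) (R : ℝ) (hR : 0 < R)
    (d δ : ℝ) (hd4 : 4 * d = β - α) (hδ : δ ≤ Real.sin d) (hδ2 : δ ≤ 1/2)
    (w u : ℂ)
    (hw : ∃ r θ : ℝ, 2*R ≤ r ∧ α + d ≤ θ ∧ θ ≤ β - d ∧ w = r * Complex.exp ((θ:ℂ) * I))
    (hu : ‖u‖ ≤ δ * ‖w‖) :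
    ∃ r θ : ℝ, R ≤ r ∧ α ≤ θ ∧ θ ≤ β ∧ w + u = r * Complex.exp ((θ:ℂ) * I) := by
  have hπ0 := Real.pi_pos
  have hd0 : 0 < d := by linarith
  have hdπ : d < π / 4 := by linarith
  obtain ⟨r, θ, hRr, hαθ, hθβ, rfl⟩ := hw
  have hr0 : (0:ℝ) < r := by linarith
  have habsw : ‖(r:ℂ) * Complex.exp ((θ:ℂ)*I)‖ = r := aux_abs θ r hr0.le
  rw [habsw] at hu
  have hsind : Real.sin d ≤ Real.sin (θ - α) :=
    sin_ge_sin d (θ - α) hd0 (by linarith) (by linarith)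
  have hsind2 : Real.sin d ≤ Real.sin (β - θ) :=
    sin_ge_sin d (β - θ) hd0 (by linarith) (by linarith)
  apply (mem_sector_iff α β hαβ hπ R hR _).mpr
  refine ⟨?_, ?_, ?_⟩
  · calc R ≤ r - δ * r := by nlinarith
      _ ≤ ‖(r:ℂ) * Complex.exp ((θ:ℂ)*I)‖ - ‖u‖ := by
          rw [habsw]; linarith
      _ ≤ ‖(r:ℂ) * Complex.exp ((θ:ℂ)*I) + u‖ := by
          have h := norm_add_le ((r:ℂ) * Complex.exp ((θ:ℂ)*I) + u) (-u)
          simp only [add_neg_cancel_right, norm_neg] at h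
          linarith
  · rw [mul_add, Complex.add_im, aux_im_exp]
    have h1 := aux_abs_im_le α u
    have h2 : -(δ * r) ≤ (Complex.exp (-(α:ℂ)*I) * u).im :=
      (abs_le.mp (le_trans h1 hu)).1
    nlinarith
  · rw [mul_add, Complex.add_im, aux_im_exp]
    have h1 := aux_abs_im_le β u
    have h2 : (Complex.exp (-(β:ℂ)*I) * u).im ≤ δ * r := by
      have := (abs_le.mp (h1.trans hu)).2
      linarith
    have h3 : Real.sin (θ - β) = -Real.sin (β - θ) := by
      rw [show θ - β = -(β - θ) by ring, Real.sin_neg]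
    nlinarith

lemma aux_convex_im_nonneg (c : ℂ) : Convex ℝ {w : ℂ | 0 ≤ (c * w).im} := by
  have hlin : IsLinearMap ℝ (fun w : ℂ => (c * w).im) := by
    constructor
    · intro x y; rw [mul_add, Complex.add_im]
    · intro r x
      rw [smul_eq_mul, Complex.real_smul, show c * (↑r * x) = ↑r * (c * x) by ring]
      simp [Complex.mul_im]
  exact convex_halfSpace_ge hlin 0

lemma aux_convex_im_nonpos (c : ℂ) : Convex ℝ {w : ℂ | (c * w).im ≤ 0} := by
  have hlin : IsLinearMap ℝ (fun w : ℂ => (c * w).im) := by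
    constructor
    · intro x y; rw [mul_add, Complex.add_im]
    · intro r x
      rw [smul_eq_mul, Complex.real_smul, show c * (↑r * x) = ↑r * (c * x) by ring]
      simp [Complex.mul_im]
  exact convex_halfSpace_le hlin 0

lemma aux_convex_re_ge (c : ℂ) (m : ℝ) : Convex ℝ {w : ℂ | m ≤ (c * w).re} := by
  have hlin : IsLinearMap ℝ (fun w : ℂ => (c * w).re) := by
    constructor
    · intro x y; rw [mul_add, Complex.add_re]
    · intro r x
      rw [smul_eq_mul, Complex.real_smul, show c * (↑r * x) = ↑r * (c * x) by ring]
      simp [Complex.mul_re]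
  exact convex_halfSpace_ge hlin m

/-- (Univalence) If `A` is holomorphic near the closed sector
`S = {r e^{iθ} : r ≥ M, α ≤ θ ≤ β}` (with `β - α < π`) and `A(μ) → 0` as `|μ| → ∞` in `S`,
then `μ ↦ μ(1 + A(μ))` is injective on some subsector `{r e^{iθ} : r ≥ M̃, α̃ ≤ θ ≤ β̃}`. -/
theorem univalent_on_subsector (α β : ℝ) (hαβ : α < β) (hπ : β - α < π) (M : ℝ) (hM : 0 < M)
    (A : ℂ → ℂ) (U : Set ℂ) (hUopen : IsOpen U)
    (hSU : {z : ℂ | ∃ r θ : ℝ, M ≤ r ∧ α ≤ θ ∧ θ ≤ β ∧ z = r * Complex.exp (θ * Complex.I)} ⊆ U)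
    (hA : DifferentiableOn ℂ A U)
    (hlim : Tendsto A (comap (fun z : ℂ => ‖z‖) atTop ⊓
        𝓟 {z : ℂ | ∃ r θ : ℝ, M ≤ r ∧ α ≤ θ ∧ θ ≤ β ∧ z = r * Complex.exp (θ * Complex.I)})
      (nhds 0)) :
    ∃ α' β' M' : ℝ, α ≤ α' ∧ α' < β' ∧ β' ≤ β ∧ M ≤ M' ∧
      Set.InjOn (fun μ : ℂ => μ * (1 + A μ))
        {z : ℂ | ∃ r θ : ℝ, M' ≤ r ∧ α' ≤ θ ∧ θ ≤ β' ∧ z = r * Complex.exp (θ * Complex.I)} := by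
  have hπ0 := Real.pi_pos
  set d : ℝ := (β - α) / 4 with hd
  have hd0 : 0 < d := by simp only [hd]; linarith
  have hdπ : d < π / 4 := by simp only [hd]; linarith
  have hsind : 0 < Real.sin d := Real.sin_pos_of_pos_of_lt_pi hd0 (by linarith)
  set δ : ℝ := min (Real.sin d) (1/2) with hδdef
  have hδ0 : 0 < δ := lt_min hsind (by norm_num)
  have hδsin : δ ≤ Real.sin d := min_le_left _ _
  have hδhalf : δ ≤ 1/2 := min_le_right _ _
  set ε : ℝ := δ / 8 with hεdef
  have hε0 : 0 < ε := by simp only [hεdef]; linarith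
  -- extract R₀ from hlim
  set S : Set ℂ :=
    {z : ℂ | ∃ r θ : ℝ, M ≤ r ∧ α ≤ θ ∧ θ ≤ β ∧ z = r * Complex.exp (θ * Complex.I)} with hS
  have hev : ∀ᶠ z in (comap (fun z : ℂ => ‖z‖) atTop ⊓ 𝓟 S), dist (A z) 0 < ε :=
    hlim (Metric.ball_mem_nhds 0 hε0)
  rw [eventually_inf_principal] at hev
  rw [eventually_comap] at hev
  obtain ⟨R₀, hR₀⟩ := eventually_atTop.mp hev
  have hAbound : ∀ z : ℂ, z ∈ S → R₀ ≤ ‖z‖ → ‖A z‖ ≤ ε := by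
    intro z hz hRz
    have := hR₀ (‖z‖) hRz z rfl hz
    rw [dist_zero_right] at this
    exact le_of_lt this
  set R : ℝ := max M R₀ with hRdef
  have hRM : M ≤ R := le_max_left _ _
  have hR0 : 0 < R := lt_of_lt_of_le hM hRM
  set M' : ℝ := 4 * R with hM'def
  have hMM' : M ≤ M' := by linarith
  set α' : ℝ := α + d with hα'
  set β' : ℝ := β - d with hβ'
  set γ : ℝ := (α + β) / 2 with hγ
  have hα'β' : α' < β' := by simp only [hα', hβ', hd]; linarith
  have hα'β'2 : β' - α' = 2 * d := by simp only [hα', hβ', hd]; ring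
  -- cos d ≥ 1/2
  have hcosd : (1:ℝ)/2 ≤ Real.cos d := by
    rw [← Real.cos_pi_div_three]
    apply Real.cos_le_cos_of_nonneg_of_le_pi hd0.le (by linarith) (by linarith)
  -- the convex set T
  set T : Set ℂ := {w : ℂ | 0 ≤ (Complex.exp (-(α':ℂ)*I) * w).im} ∩
      {w : ℂ | (Complex.exp (-(β':ℂ)*I) * w).im ≤ 0} ∩
      {w : ℂ | 2*R ≤ (Complex.exp (-(γ:ℂ)*I) * w).re} with hT
  have hTconv : Convex ℝ T :=
    ((aux_convex_im_nonneg _).inter (aux_convex_im_nonpos _)).inter (aux_convex_re_ge _ _)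
  -- S' ⊆ T
  set S' : Set ℂ :=
    {z : ℂ | ∃ r θ : ℝ, M' ≤ r ∧ α' ≤ θ ∧ θ ≤ β' ∧ z = r * Complex.exp (θ * Complex.I)} with hS'
  have hS'T : S' ⊆ T := by
    rintro z ⟨r, θ, hM'r, hα'θ, hθβ', rfl⟩
    have hr0 : (0:ℝ) < r := by linarith
    refine ⟨⟨?_, ?_⟩, ?_⟩
    · rw [Set.mem_setOf_eq, aux_im_exp]
      exact mul_nonneg hr0.le
        (Real.sin_nonneg_of_nonneg_of_le_pi (by linarith) (by linarith))
    · rw [Set.mem_setOf_eq, aux_im_exp]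
      have : Real.sin (θ - β') ≤ 0 := by
        have h := Real.sin_nonneg_of_nonneg_of_le_pi (x := β' - θ) (by linarith) (by linarith)
        rw [show θ - β' = -(β' - θ) by ring, Real.sin_neg]; linarith
      exact mul_nonpos_of_nonneg_of_nonpos hr0.le this
    · rw [Set.mem_setOf_eq, aux_re_exp]
      have h1 : |θ - γ| ≤ d := by
        rw [abs_le]
        constructor <;> (simp only [hα', hβ', hγ, hd] at *; linarith)
      have h2 : Real.cos d ≤ Real.cos (θ - γ) := by
        rw [← Real.cos_abs (θ - γ)]
        exact Real.cos_le_cos_of_nonneg_of_le_pi (abs_nonneg _) (by linarith) h1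
      nlinarith
  -- T members are in the subsector sector(2R, α', β')
  have hTmem : ∀ w ∈ T, ∃ r θ : ℝ, 2*R ≤ r ∧ α' ≤ θ ∧ θ ≤ β' ∧
      w = r * Complex.exp ((θ:ℂ) * I) := by
    rintro w ⟨⟨h1, h2⟩, h3⟩
    apply (mem_sector_iff α' β' hα'β' (by rw [hα'β'2]; linarith) (2*R) (by linarith) w).mpr
    refine ⟨?_, h1, h2⟩
    calc 2*R ≤ (Complex.exp (-(γ:ℂ)*I) * w).re := h3
      _ ≤ ‖Complex.exp (-(γ:ℂ)*I) * w‖ := Complex.re_le_norm _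
      _ = ‖w‖ := by
          rw [norm_mul, show (-(γ:ℂ)*I) = ((-γ:ℝ):ℂ) * I by push_cast; ring,
            Complex.norm_exp_ofReal_mul_I, one_mul]
  -- points near T are in S with |A| ≤ ε
  have hball : ∀ w ∈ T, ∀ z : ℂ, ‖z - w‖ ≤ δ * ‖w‖ →
      z ∈ S ∧ ‖A z‖ ≤ ε ∧ z ∈ U := by
    intro w hw z hz
    obtain ⟨r, θ, hRr, hα'θ, hθβ', hweq⟩ := hTmem w hw
    have hclose := mem_sector_of_close α β hαβ hπ R hR0 d δ (by rw [hd]; ring)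
      hδsin hδhalf w (z - w) ⟨r, θ, hRr, hα'θ, hθβ', hweq⟩ hz
    rw [add_sub_cancel] at hclose
    obtain ⟨r', θ', hRr', hαθ', hθ'β, hzeq⟩ := hclose
    have hzS : z ∈ S := ⟨r', θ', by linarith, hαθ', hθ'β, hzeq⟩
    have habsz : ‖z‖ = r' := by rw [hzeq]; exact aux_abs θ' r' (by linarith)
    refine ⟨hzS, hAbound z hzS ?_, hSU hzS⟩
    rw [habsz]
    calc R₀ ≤ R := le_max_right _ _
      _ ≤ r' := hRr'
  -- derivative bound on T
  have hderiv : ∀ w ∈ T, ‖A w + w * deriv A w‖ ≤ 1/2 := by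
    intro w hw
    obtain ⟨r, θ, hRr, _, _, hweq⟩ := hTmem w hw
    have habsw : ‖w‖ = r := by rw [hweq]; exact aux_abs θ r (by linarith)
    have habsw0 : 0 < ‖w‖ := by rw [habsw]; linarith
    have hρ0 : 0 < δ * ‖w‖ := mul_pos hδ0 habsw0
    have hAw : ‖A w‖ ≤ ε :=
      (hball w hw w (by simp only [sub_self, norm_zero]; positivity)).2.1
    have hballU : Metric.ball w (δ * ‖w‖) ⊆ U := by
      intro z hzb
      rw [Metric.mem_ball, Complex.dist_eq] at hzb
      exact (hball w hw z hzb.le).2.2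
    have hdiff : DifferentiableOn ℂ A (Metric.ball w (δ * ‖w‖)) :=
      hA.mono hballU
    have hmaps : Set.MapsTo A (Metric.ball w (δ * ‖w‖)) (Metric.ball (A w) (3*ε)) := by
      intro z hzb
      rw [Metric.mem_ball, Complex.dist_eq] at hzb ⊢
      have hz := (hball w hw z hzb.le).2.1
      calc ‖A z - A w‖ ≤ ‖A z‖ + ‖A w‖ := by
            have := norm_sub_le_norm_sub_add_norm_sub (A z) 0 (A w)
            simpa [sub_eq_add_neg] using norm_add_le (A z) (-A w)
        _ ≤ ε + ε := add_le_add hz hAw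
        _ < 3 * ε := by linarith
    have hdb : ‖deriv A w‖ ≤ 3*ε / (δ * ‖w‖) :=
      Complex.norm_deriv_le_div_of_mapsTo_ball hdiff (hmaps.mono_right Metric.ball_subset_closedBall) hρ0
    have hwd : ‖w * deriv A w‖ ≤ 3*ε/δ := by
      rw [norm_mul]
      calc ‖w‖ * ‖deriv A w‖
          ≤ ‖w‖ * (3*ε / (δ * ‖w‖)) := by
            apply mul_le_mul_of_nonneg_left hdb habsw0.le
        _ = 3*ε/δ := by field_simp
    calc ‖A w + w * deriv A w‖
        ≤ ‖A w‖ + ‖w * deriv A w‖ := norm_add_le _ _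
      _ ≤ ε + 3*ε/δ := add_le_add hAw hwd
      _ ≤ 1/2 := by
          have h38 : 3*ε/δ = 3/8 := by
            rw [hεdef]; field_simp
          rw [h38, hεdef]
          linarith
  -- mean value estimate
  have hG : ∀ w ∈ T, HasDerivWithinAt (fun z : ℂ => z * A z) (A w + w * deriv A w) T w := by
    intro w hw
    have hwU : w ∈ U := (hball w hw w (by simp only [sub_self, norm_zero]; positivity)).2.2
    have hdA : DifferentiableAt ℂ A w := hA.differentiableAt (hUopen.mem_nhds hwU)
    have h := (hasDerivAt_id w).mul hdA.hasDerivAt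
    simp only [one_mul, id] at h
    exact (h.congr_deriv (by ring)).hasDerivWithinAt
  have hlip : ∀ z₁ ∈ T, ∀ z₂ ∈ T,
      ‖z₂ * A z₂ - z₁ * A z₁‖ ≤ 1/2 * ‖z₂ - z₁‖ := by
    intro z₁ h₁ z₂ h₂
    exact hTconv.norm_image_sub_le_of_norm_hasDerivWithin_le hG
      (fun w hw => by exact hderiv w hw) h₁ h₂
  refine ⟨α', β', M', by simp only [hα']; linarith, hα'β', by simp only [hβ']; linarith, hMM', ?_⟩
  intro z₁ hz₁ z₂ hz₂ heq
  have h₁ : z₁ ∈ T := hS'T hz₁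
  have h₂ : z₂ ∈ T := hS'T hz₂
  simp only at heq
  have hdiffeq : z₁ - z₂ = z₂ * A z₂ - z₁ * A z₁ := by
    have : z₁ + z₁ * A z₁ = z₂ + z₂ * A z₂ := by ring_nf; ring_nf at heq; linear_combination heq
    linear_combination this
  have := hlip z₂ h₂ z₁ h₁
  rw [show z₁ * A z₁ - z₂ * A z₂ = -(z₂ * A z₂ - z₁ * A z₁) by ring] at this
  have hnorm : ‖z₁ - z₂‖ ≤ 1/2 * ‖z₁ - z₂‖ := by
    calc ‖z₁ - z₂‖ = ‖z₂ * A z₂ - z₁ * A z₁‖ := by rw [hdiffeq]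
      _ = ‖-(z₂ * A z₂ - z₁ * A z₁)‖ := by rw [norm_neg]
      _ ≤ 1/2 * ‖z₁ - z₂‖ := by
          have h' := hlip z₂ h₂ z₁ h₁
          rw [show z₁ * A z₁ - z₂ * A z₂ = -(z₂ * A z₂ - z₁ * A z₁) from by ring] at h'
          rw [norm_neg] at h' ⊢
          exact h'
  have h0 : ‖z₁ - z₂‖ = 0 := by linarith [norm_nonneg (z₁ - z₂)]
  exact sub_eq_zero.mp (norm_eq_zero.mp h0)
  
end
end

section
/- Fix an integer m ≥ 3 and an integer ℓ with 1 ≤ ℓ ≤ m−1. Then: (i) for every a ∈ ℝ^m and every 0 ≤ j ≤ m+1, c_{ℓ,j}(a) is real; (ii) c_{ℓ,0}(a) = (1/π)·B(1/2, 1+1/m)·sin(ℓπ/m) for every a ∈ ℂ^m, and c_{ℓ,1}(a) = 0 for every a ∈ ℂ^m; (iii) for 1 ≤ j ≤ m, c_{ℓ,j}(a) depends only on a_1, …, a_j (it is unchanged if a_{j+1}, …, a_m are altered); (iv) if gcd(m,ℓ) = 1 and 2 ≤ j ≤ m with j ≠ m/2 + 1, then for each fixed a_1, …, a_{j−1}, the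 map a_j ↦ c_{ℓ,j}(a) is a nonconstant affine function of a_j. -/
open Complex Real Filter Set

noncomputable section

/-- The polynomial `a₁ z + a₂ z² + ⋯ + a_m z^m`; its `j`-th coefficient (after taking a
`k`-th power) is the coefficient of `z^{-j}` in `(a₁/z + ⋯ + a_m/z^m)^k`. -/
def Qa (m : ℕ) (a : Fin m → ℂ) : Polynomial ℂ :=
  ∑ i : Fin m, Polynomial.C (a i) * Polynomial.X ^ ((i : ℕ) + 1)

/-- The generalized binomial coefficient `Binom(1/2, k)`. -/
def halfChoose (k : ℕ) : ℂ :=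
  (∏ i ∈ Finset.range k, ((1:ℂ)/2 - (i : ℂ))) / (Nat.factorial k : ℂ)

/-- `b_{j,k}(a)`: the coefficient of `z^{-j}` in `Binom(1/2,k)·(a₁/z + ⋯ + a_m/z^m)^k`. -/
def bjk (m : ℕ) (a : Fin m → ℂ) (j k : ℕ) : ℂ :=
  halfChoose k * (Qa m a ^ k).coeff j

/-- `b_j(a) = ∑_{k=0}^j b_{j,k}(a)`. -/
def bcoef (m : ℕ) (a : Fin m → ℂ) (j : ℕ) : ℂ :=
  ∑ k ∈ Finset.range (j+1), bjk m a j k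

/-- The Beta function `B(x,y) = Γ(x)Γ(y)/Γ(x+y)` on the reals. -/
def betaR (x y : ℝ) : ℝ := Real.Gamma x * Real.Gamma y / Real.Gamma (x + y)

/-- The real constants `K_{m,j,k}` (note `k < j/m ↔ k·m < j`, and for even `m`,
`j = m/2 + 1 ↔ 2j = m + 2`). -/
def Kmjk (m j k : ℕ) : ℝ :=
  if k * m < j then 0
  else if j = 0 ∧ k = 0 then betaR (1/2) (1 + 1/m) / (2 * Real.cos (π/m))
  else if j = 1 ∧ k = 1 then -2/m
  else if Even m ∧ 2*j = m+2 then
    (2/m) * (Real.log 2 - ∑ s ∈ Finset.range (k-1), 1/(2*(s:ℝ)+1))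
  else (1/m) * betaR ((k:ℝ) - ((j:ℝ)-1)/m) (((j:ℝ)-1)/m - 1/2)

/-- `K_{m,j}(a) = ∑_{k=0}^j K_{m,j,k} b_{j,k}(a)`. -/
def Kmj (m : ℕ) (a : Fin m → ℂ) (j : ℕ) : ℂ :=
  ∑ k ∈ Finset.range (j+1), (Kmjk m j k : ℂ) * bjk m a j k

/-- The coefficients
`c_{ℓ,j}(a) = -(2/π) ∑_{k=0}^j (-1)^{(ℓ+1)k} K_{m,j,k} b_{j,k}(a) sin((j-1)ℓπ/m) cos((j-1)π/m)`. -/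
def cCoeff (m ℓ : ℕ) (a : Fin m → ℂ) (j : ℕ) : ℂ :=
  ((-(2/π) : ℝ) : ℂ) * ∑ k ∈ Finset.range (j+1),
    (-1 : ℂ) ^ ((ℓ+1)*k) * (Kmjk m j k : ℂ) * bjk m a j k *
      ((Real.sin (((j:ℝ)-1)*ℓ*π/m) : ℝ) : ℂ) * ((Real.cos (((j:ℝ)-1)*π/m) : ℝ) : ℂ)

/-- `ν(a) = b_{m/2+1}(a)` for even `m`, `0` for odd `m`. -/
def nuA (m : ℕ) (a : Fin m → ℂ) : ℂ := if Even m then bcoef m a (m/2+1) else 0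

/-- `η_ℓ(a) = (-1)^{(ℓ-1)/2}·2ν(a)/m` for odd `ℓ`, `0` otherwise. -/
def etaL (m ℓ : ℕ) (a : Fin m → ℂ) : ℂ :=
  if Odd ℓ then (-1) ^ ((ℓ-1)/2) * (2 * nuA m a / (m : ℂ)) else 0


lemma Qa_coeff (m : ℕ) (a : Fin m → ℂ) (d : ℕ) :
    (Qa m a).coeff d = ∑ i : Fin m, if d = (i:ℕ)+1 then a i else 0 := by
  simp [Qa, Polynomial.finset_sum_coeff, Polynomial.coeff_C_mul, Polynomial.coeff_X_pow]

lemma Qa_coeff_zero (m : ℕ) (a : Fin m → ℂ) : (Qa m a).coeff 0 = 0 := by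
  simp [Qa_coeff]

lemma Qa_coeff_succ (m : ℕ) (a : Fin m → ℂ) (i : Fin m) :
    (Qa m a).coeff ((i:ℕ)+1) = a i := by
  rw [Qa_coeff, Finset.sum_eq_single i]
  · simp
  · intro b _ hb
    have : ((i:ℕ)+1 = (b:ℕ)+1) ↔ False := by
      simp only [iff_false]
      intro h
      exact hb (Fin.ext (by omega))
    simp only [this, if_false]
  · simp

lemma coeff_pow_eq_of_agree {p q : Polynomial ℂ} {n : ℕ}
    (h : ∀ i ≤ n, p.coeff i = q.coeff i) (k : ℕ) :
    ∀ i ≤ n, (p^k).coeff i = (q^k).coeff i := by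
  induction k with
  | zero => simp
  | succ k ih =>
    intro i hi
    rw [pow_succ, pow_succ, Polynomial.coeff_mul, Polynomial.coeff_mul]
    apply Finset.sum_congr rfl
    intro x hx
    rw [Finset.HasAntidiagonal.mem_antidiagonal] at hx
    rw [ih x.1 (by omega), h x.2 (by omega)]

lemma Qa_update (m : ℕ) (a : Fin m → ℂ) (idx : Fin m) (t : ℂ) :
    Qa m (Function.update a idx t) =
      Qa m (Function.update a idx 0) + Polynomial.C t * Polynomial.X ^ ((idx:ℕ)+1) := by
  unfold Qa
  rw [← Finset.sum_erase_add _ _ (Finset.mem_univ idx),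
      ← Finset.sum_erase_add _ _ (Finset.mem_univ idx)]
  have h1 : ∀ b : Fin m → ℂ, ∀ v : ℂ,
      ∑ i ∈ Finset.univ.erase idx,
          Polynomial.C (Function.update b idx v i) * Polynomial.X ^ ((i:ℕ)+1)
      = ∑ i ∈ Finset.univ.erase idx, Polynomial.C (b i) * Polynomial.X ^ ((i:ℕ)+1) := by
    intro b v
    refine Finset.sum_congr rfl fun i hi => ?_
    rw [Function.update_of_ne (Finset.ne_of_mem_erase hi)]
  rw [h1, h1]
  simp [Function.update_self]

lemma coeff_pow_add' {q : Polynomial ℂ} (hq : q.coeff 0 = 0) {j : ℕ} (hj : 1 ≤ j) (t : ℂ)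
    {k : ℕ} (hk : 2 ≤ k) :
    ((q + Polynomial.C t * Polynomial.X ^ j) ^ k).coeff j = (q ^ k).coeff j := by
  rw [add_pow, Polynomial.finset_sum_coeff, Finset.sum_eq_single k]
  · simp
  · intro s hs hsk
    rw [Finset.mem_range] at hs
    have hs' : s < k := by omega
    set e := k - s with he
    have he1 : 1 ≤ e := by omega
    have : (Polynomial.C t * Polynomial.X ^ j) ^ e
        = Polynomial.C (t^e) * Polynomial.X ^ (j*e) := by
      rw [mul_pow, ← Polynomial.C_pow, pow_mul]
    rw [this]
    have hre : q ^ s * (Polynomial.C (t^e) * Polynomial.X ^ (j*e)) * (k.choose s : Polynomial ℂ)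
        = (q ^ s * Polynomial.C (t^e) * (k.choose s : Polynomial ℂ)) * Polynomial.X ^ (j*e) := by
      ring
    rw [hre, Polynomial.coeff_mul_X_pow']
    rcases Nat.lt_or_ge e 2 with h2 | h2
    · have he' : e = 1 := by omega
      have hs1 : 1 ≤ s := by omega
      rw [if_pos (by rw [he']; omega)]
      have : j - j * e = 0 := by rw [he']; omega
      rw [this, Polynomial.mul_coeff_zero, Polynomial.mul_coeff_zero]
      have hq0 : (q ^ s).coeff 0 = 0 := by
        have := map_pow Polynomial.constantCoeff q s
        simp only [Polynomial.constantCoeff_apply] at this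
        rw [this, hq, zero_pow (by omega)]
      rw [hq0, zero_mul, zero_mul]
    · rw [if_neg]
      nlinarith
  · intro h
    exact absurd (Finset.self_mem_range_succ k) h

lemma conj_halfChoose (k : ℕ) : (starRingEnd ℂ) (halfChoose k) = halfChoose k := by
  simp only [halfChoose, map_div₀, map_prod, map_sub, map_natCast, map_one,
    Complex.conj_ofNat, one_div, map_inv₀]

lemma conj_bjk (m : ℕ) (a : Fin m → ℂ) (ha : ∀ i, (a i).im = 0) (j k : ℕ) :
    (starRingEnd ℂ) (bjk m a j k) = bjk m a j k := by
  have hQ : Polynomial.map (starRingEnd ℂ) (Qa m a) = Qa m a := by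
    unfold Qa
    rw [Polynomial.map_sum]
    refine Finset.sum_congr rfl fun i _ => ?_
    rw [Polynomial.map_mul, Polynomial.map_pow, Polynomial.map_C, Polynomial.map_X]
    congr 1
    exact congrArg _ (Complex.conj_eq_iff_im.mpr (ha i))
  unfold bjk
  rw [map_mul, conj_halfChoose]
  congr 1
  calc (starRingEnd ℂ) ((Qa m a ^ k).coeff j)
      = (Polynomial.map (starRingEnd ℂ) (Qa m a ^ k)).coeff j := by
        rw [Polynomial.coeff_map]
    _ = ((Polynomial.map (starRingEnd ℂ) (Qa m a)) ^ k).coeff j := by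
        rw [Polynomial.map_pow]
    _ = (Qa m a ^ k).coeff j := by rw [hQ]

lemma halfChoose_zero : halfChoose 0 = 1 := by simp [halfChoose]
lemma halfChoose_one : halfChoose 1 = 1/2 := by simp [halfChoose]

lemma sin_ne (m ℓ j : ℕ) (hm : 3 ≤ m) (hco : Nat.gcd m ℓ = 1)
    (hj2 : 2 ≤ j) (hjm : j ≤ m) :
    Real.sin (((j:ℝ)-1)*ℓ*π/m) ≠ 0 := by
  intro h
  rw [Real.sin_eq_zero_iff] at h
  obtain ⟨n, hn⟩ := h
  have hπ : (0:ℝ) < π := Real.pi_pos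
  have hm0 : (m:ℝ) ≠ 0 := by positivity
  have key : ((n * m : ℤ) : ℝ) = (((j-1)*ℓ : ℕ) : ℤ) := by
    push_cast
    have : ((j:ℝ)-1)*ℓ*π/m = (((j:ℝ)-1)*ℓ/m) * π := by ring
    rw [this] at hn
    have h2 : (n:ℝ) = ((j:ℝ)-1)*ℓ/m := mul_right_cancel₀ (ne_of_gt hπ) hn
    have hj1 : (1:ℝ) ≤ (j:ℝ) := by exact_mod_cast Nat.one_le_of_lt hj2
    field_simp at h2 ⊢
    rw [Nat.cast_sub (by omega : 1 ≤ j), Nat.cast_one]; nlinarith [h2]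
  have keyZ : n * m = (((j-1)*ℓ : ℕ) : ℤ) := by exact_mod_cast key
  have hdvd : (m:ℤ) ∣ (((j-1)*ℓ : ℕ) : ℤ) := ⟨n, by linarith⟩
  have hdvdN : m ∣ (j-1)*ℓ := by exact_mod_cast hdvd
  have hco' : Nat.Coprime m ℓ := hco
  have : m ∣ (j-1) := hco'.dvd_of_dvd_mul_right hdvdN
  have := Nat.le_of_dvd (by omega) this
  omega

lemma cos_ne (m j : ℕ) (hm : 3 ≤ m) (hj2 : 2 ≤ j) (hjm : j ≤ m) (hne : 2*j ≠ m + 2) :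
    Real.cos (((j:ℝ)-1)*π/m) ≠ 0 := by
  intro h
  rw [Real.cos_eq_zero_iff] at h
  obtain ⟨n, hn⟩ := h
  have hπ : (0:ℝ) < π := Real.pi_pos
  have hm0 : (m:ℝ) ≠ 0 := by positivity
  have h2 : ((2*(j:ℤ)-2 : ℤ) : ℝ) = (((2*n+1)*m : ℤ) : ℝ) := by
    push_cast
    have e1 : ((j:ℝ)-1)*π/m = (((j:ℝ)-1)/m) * π := by ring
    have e2 : (2*(n:ℝ)+1)*π/2 = ((2*(n:ℝ)+1)/2) * π := by ring
    rw [e1, e2] at hn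
    have h3 := mul_right_cancel₀ (ne_of_gt hπ) hn
    field_simp at h3
    linarith
  have hZ : 2*(j:ℤ)-2 = (2*n+1)*m := by exact_mod_cast h2
  have hmpos : (0:ℤ) < m := by exact_mod_cast Nat.pos_of_ne_zero (by omega)
  have hlow : (0:ℤ) < 2*(j:ℤ)-2 := by
    have : (2:ℤ) ≤ (j:ℤ) := by exact_mod_cast hj2
    omega
  have hhigh : 2*(j:ℤ)-2 < 2*m := by
    have : (j:ℤ) ≤ (m:ℤ) := by exact_mod_cast hjm
    omega
  have hn0 : 0 < 2*n+1 := by nlinarith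
  have hn1 : 2*n+1 < 2 := by nlinarith
  have hn' : n = 0 := by omega
  subst hn'
  have : (2*(j:ℤ)) = (m:ℤ)+2 := by omega
  exact hne (by exact_mod_cast this)

lemma Kmjk_j1_ne (m j : ℕ) (hm : 3 ≤ m) (hj2 : 2 ≤ j) (hjm : j ≤ m) (hne : 2*j ≠ m + 2) :
    Kmjk m j 1 ≠ 0 := by
  have hval : Kmjk m j 1 = (1/m) * betaR ((1:ℝ) - ((j:ℝ)-1)/m) (((j:ℝ)-1)/m - 1/2) := by
    unfold Kmjk
    rw [if_neg (by omega), if_neg (by omega), if_neg (by omega),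
        if_neg (by rintro ⟨_, h⟩; exact hne h)]
    norm_num
  rw [hval]
  have hmR : (0:ℝ) < m := by positivity
  have hjR1 : (1:ℝ) ≤ (j:ℝ) - 1 := by
    have : (2:ℝ) ≤ (j:ℝ) := by exact_mod_cast hj2
    linarith
  have hjRm : (j:ℝ) - 1 < (m:ℝ) := by
    have : (j:ℝ) ≤ (m:ℝ) := by exact_mod_cast hjm
    linarith
  set r : ℝ := ((j:ℝ)-1)/m with hr
  have hr0 : 0 < r := by positivity
  have hr1 : r < 1 := (div_lt_one hmR).mpr hjRm
  have hy0 : r - 1/2 ≠ 0 := by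
    intro h
    have : (j:ℝ) - 1 = (m:ℝ)/2 := by
      field_simp [hr] at h
      rw [hr] at h; field_simp at h; linarith
    have : 2*(j:ℝ) = (m:ℝ) + 2 := by linarith
    exact hne (by exact_mod_cast this)
  have hylow : -(1/2 : ℝ) < r - 1/2 := by linarith
  have hGx : Real.Gamma (1 - r) ≠ 0 := by
    apply Real.Gamma_ne_zero
    intro n
    have : (0:ℝ) ≤ (n:ℝ) := Nat.cast_nonneg n
    intro h; linarith [h ▸ (by linarith : (0:ℝ) < 1 - r)]
  have hGy : Real.Gamma (r - 1/2) ≠ 0 := by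
    apply Real.Gamma_ne_zero
    intro n h
    rcases n with _ | n
    · simp at h; exact hy0 (by linarith [h])
    · have : (0:ℝ) ≤ (n:ℝ) := Nat.cast_nonneg n
      push_cast at h
      linarith
  have hsum : (1 - r) + (r - 1/2) = 1/2 := by ring
  unfold betaR
  rw [hsum, Real.Gamma_one_half_eq]
  have hs : Real.sqrt π ≠ 0 := by positivity
  have : (1:ℝ)/m ≠ 0 := one_div_ne_zero (ne_of_gt hmR)
  exact mul_ne_zero this (div_ne_zero (mul_ne_zero hGx hGy) hs)

/-- Properties of the coefficients `c_{ℓ,j}(a)`: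
(i) real for real `a`; (ii) `c_{ℓ,0} = (1/π)B(1/2,1+1/m)sin(ℓπ/m)` and `c_{ℓ,1} = 0`;
(iii) `c_{ℓ,j}` depends only on `a₁,…,a_j` for `1 ≤ j ≤ m`; (iv) if `gcd(m,ℓ)=1` and
`2 ≤ j ≤ m`, `j ≠ m/2+1`, then `a_j ↦ c_{ℓ,j}(a)` is a nonconstant affine map. -/
theorem cCoeff_properties (m ℓ : ℕ) (hm : 3 ≤ m) (hℓ1 : 1 ≤ ℓ) (hℓ2 : ℓ ≤ m - 1) :
    (∀ a : Fin m → ℂ, (∀ i, (a i).im = 0) → ∀ j ≤ m + 1, (cCoeff m ℓ a j).im = 0) ∧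
    (∀ a : Fin m → ℂ,
      cCoeff m ℓ a 0 = (((1/π) * betaR (1/2) (1 + 1/m) * Real.sin (ℓ*π/m) : ℝ) : ℂ) ∧
      cCoeff m ℓ a 1 = 0) ∧
    (∀ a a' : Fin m → ℂ, ∀ j : ℕ, 1 ≤ j → j ≤ m →
      (∀ i : Fin m, (i : ℕ) + 1 ≤ j → a i = a' i) → cCoeff m ℓ a j = cCoeff m ℓ a' j) ∧
    (Nat.gcd m ℓ = 1 → ∀ j : ℕ, 2 ≤ j → ∀ hjm : j ≤ m, 2*j ≠ m + 2 →
      ∀ a : Fin m → ℂ, ∃ p q : ℂ, q ≠ 0 ∧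
        ∀ t : ℂ, cCoeff m ℓ (Function.update a (⟨j - 1, by omega⟩ : Fin m) t) j = p + q * t) := by
  have hπ : (0:ℝ) < π := Real.pi_pos
  have hπ0 : π ≠ 0 := ne_of_gt hπ
  have hm0 : (m:ℝ) ≠ 0 := by positivity
  refine ⟨?_, ?_, ?_, ?_⟩
  · -- (i) reality
    intro a ha j _
    rw [← Complex.conj_eq_iff_im]
    unfold cCoeff
    rw [map_mul (starRingEnd ℂ), map_sum, Complex.conj_ofReal]
    congr 1
    refine Finset.sum_congr rfl fun k _ => ?_
    rw [map_mul (starRingEnd ℂ), map_mul (starRingEnd ℂ), map_mul (starRingEnd ℂ), map_mul (starRingEnd ℂ), conj_bjk m a ha j k]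
    simp only [map_pow, map_neg, map_one, Complex.conj_ofReal]
  · -- (ii) values at j = 0 and 1
    intro a
    constructor
    · have hcos : Real.cos (π/m) ≠ 0 := by
        have h1 : (0:ℝ) < π/m := by positivity
        have h2 : π/m < π/2 := by
          apply div_lt_div_of_pos_left hπ (by norm_num)
          exact_mod_cast (by omega : 2 < m)
        exact ne_of_gt (Real.cos_pos_of_mem_Ioo ⟨by linarith, h2⟩)
      have hK : Kmjk m 0 0 = betaR (1/2) (1 + 1/m) / (2 * Real.cos (π/m)) := by
        unfold Kmjk; norm_num
      have hb : bjk m a 0 0 = 1 := by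
        unfold bjk; simp [halfChoose_zero]
      unfold cCoeff
      rw [Finset.sum_range_one, hK, hb]
      have e1 : (((0:ℕ):ℝ)-1)*(ℓ:ℝ)*π/(m:ℝ) = -((ℓ:ℝ)*π/m) := by push_cast; ring
      have e2 : (((0:ℕ):ℝ)-1)*π/(m:ℝ) = -(π/m) := by push_cast; ring
      rw [e1, e2, Real.sin_neg, Real.cos_neg]
      simp only [Nat.mul_zero, mul_zero, pow_zero, one_mul, mul_one]
      have hcollect : ∀ x y z w : ℝ, (x:ℂ) * ((y:ℂ) * (z:ℂ) * (w:ℂ)) = ((x*(y*z*w) : ℝ) : ℂ) := by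
        intro x y z w; push_cast; ring
      rw [hcollect, Complex.ofReal_inj]
      field_simp
    · unfold cCoeff
      have e : (((1:ℕ):ℝ)-1) = 0 := by norm_num
      simp [e]
  · -- (iii) dependence on a₁,…,a_j
    intro a a' j hj1 hjm hag
    unfold cCoeff
    congr 1
    refine Finset.sum_congr rfl fun k _ => ?_
    congr 2
    congr 1
    unfold bjk
    congr 1
    have hcoe : ∀ i ≤ j, (Qa m a).coeff i = (Qa m a').coeff i := by
      intro i hi
      rcases i with _ | d
      · rw [Qa_coeff_zero, Qa_coeff_zero]
      · have hd : d < m := by omega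
        have h1 := Qa_coeff_succ m a ⟨d, hd⟩
        have h2 := Qa_coeff_succ m a' ⟨d, hd⟩
        simp only at h1 h2
        rw [h1, h2]
        exact hag ⟨d, hd⟩ (by simpa using hi)
    exact coeff_pow_eq_of_agree hcoe k j le_rfl
  · -- (iv) affine nonconstant
    intro hco j hj2 hjm hne a
    have hjpos : j - 1 < m := by omega
    set idx : Fin m := ⟨j-1, hjpos⟩ with hidx
    have hidx1 : (idx:ℕ) + 1 = j := by simp [hidx]; omega
    set a0 : Fin m → ℂ := Function.update a idx 0 with ha0
    set S : ℝ := Real.sin (((j:ℝ)-1)*ℓ*π/m) with hS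
    set Cc : ℝ := Real.cos (((j:ℝ)-1)*π/m) with hCc
    refine ⟨cCoeff m ℓ a0 j,
      ((-(2/π) : ℝ) : ℂ) * ((-1:ℂ)^((ℓ+1)*1) * (Kmjk m j 1 : ℂ) * (1/2) * (S:ℂ) * (Cc:ℂ)),
      ?_, ?_⟩
    · have h1 : ((-(2/π) : ℝ) : ℂ) ≠ 0 :=
        Complex.ofReal_ne_zero.mpr (neg_ne_zero.mpr (div_ne_zero (by norm_num) hπ0))
      have hA : (-1:ℂ)^((ℓ+1)*1) ≠ 0 := pow_ne_zero _ (by norm_num : (-1:ℂ) ≠ 0)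
      have hK : ((Kmjk m j 1 : ℝ) : ℂ) ≠ 0 :=
        Complex.ofReal_ne_zero.mpr (Kmjk_j1_ne m j hm hj2 hjm hne)
      have hhalf : ((1:ℂ)/2) ≠ 0 := by norm_num
      have hSn : ((S:ℝ):ℂ) ≠ 0 := Complex.ofReal_ne_zero.mpr (sin_ne m ℓ j hm hco hj2 hjm)
      have hCn : ((Cc:ℝ):ℂ) ≠ 0 := Complex.ofReal_ne_zero.mpr (cos_ne m j hm hj2 hjm hne)
      exact mul_ne_zero h1 (mul_ne_zero (mul_ne_zero (mul_ne_zero (mul_ne_zero hA hK) hhalf) hSn) hCn)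
    · intro t
      show cCoeff m ℓ (Function.update a idx t) j = _
      have hQt : Qa m (Function.update a idx t)
          = Qa m a0 + Polynomial.C t * Polynomial.X ^ j := by
        rw [Qa_update, hidx1]
      have hq00 : (Qa m a0).coeff 0 = 0 := Qa_coeff_zero m a0
      have hq0j : (Qa m a0).coeff j = 0 := by
        rw [← hidx1, Qa_coeff_succ]
        simp [ha0]
      have hb1t : bjk m (Function.update a idx t) j 1 = (1/2) * t := by
        unfold bjk
        rw [pow_one, hQt, Polynomial.coeff_add, hq0j, halfChoose_one]
        rw [Polynomial.coeff_C_mul, Polynomial.coeff_X_pow, if_pos rfl]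
        ring
      have hb10 : bjk m a0 j 1 = 0 := by
        unfold bjk
        rw [pow_one, hq0j, mul_zero]
      have hbk : ∀ k : ℕ, k ≠ 1 →
          bjk m (Function.update a idx t) j k = bjk m a0 j k := by
        intro k hk
        rcases k with _ | k
        · simp [bjk]
        · have hk2 : 2 ≤ k + 1 := by omega
          unfold bjk
          refine congrArg (halfChoose (k+1) * ·) ?_
          rw [hQt]
          exact coeff_pow_add' hq00 (by omega) t hk2
      unfold cCoeff
      have hsplit : ∀ k ∈ Finset.range (j+1),
          (-1:ℂ)^((ℓ+1)*k) * (Kmjk m j k : ℂ) * bjk m (Function.update a idx t) j k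
            * (S:ℂ) * (Cc:ℂ)
          = (-1:ℂ)^((ℓ+1)*k) * (Kmjk m j k : ℂ) * bjk m a0 j k * (S:ℂ) * (Cc:ℂ)
            + (if k = 1 then
                (-1:ℂ)^((ℓ+1)*1) * (Kmjk m j 1 : ℂ) * ((1/2)*t) * (S:ℂ) * (Cc:ℂ)
              else 0) := by
        intro k _
        by_cases hk : k = 1
        · subst hk
          rw [hb1t, hb10, if_pos rfl]
          ring
        · rw [hbk k hk, if_neg hk]
          ring
      rw [Finset.sum_congr rfl hsplit, Finset.sum_add_distrib,
        Finset.sum_ite_eq' (Finset.range (j+1)) 1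
          (fun _ => (-1:ℂ)^((ℓ+1)*1) * (Kmjk m j 1 : ℂ) * ((1/2)*t) * (S:ℂ) * (Cc:ℂ)),
        if_pos (by rw [Finset.mem_range]; omega)]
      ring


end
end
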